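/- Fix a finite set V and integers k ≥ 1 and ℓ ≥ 0. Let the ground set be S = {(e, j) : e a nonempty subset of V, 1 ≤ j ≤ k·|e|}, and for X ⊆ S let G_X be the hypergraph on V whose edge multiset contains each e with multiplicity |{j : (e,j) ∈ X}|. Then the family { X ⊆ S : G_X is (k,ℓ)-sparse } is the family of independent sets of a matroid on S; in particular, it is nonempty, downward closed, and satisfies the matroid augmentation property, and all maximal (k,ℓ)-sparse edge multisets on V (with multiplicities bounded by k·|e|) have the same cardinality. -/
import Mathlib


/-- The number of edges of the multiset `E` spanned by the vertex set `W`. -/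
def spanCount {V : Type*} [DecidableEq V] (E : Multiset (Finset V)) (W : Finset V) : ℕ :=
  (E.filter fun e => e ⊆ W).card

/-- A hypergraph with edge multiset `E` is `(k,ℓ)`-sparse if every vertex subset spanning
at least one edge spans at most `k|W| - ℓ` edges. -/
def Sparse {V : Type*} [DecidableEq V] (k l : ℕ) (E : Multiset (Finset V)) : Prop :=
  ∀ W : Finset V, 1 ≤ spanCount E W → spanCount E W + l ≤ k * W.card

/-- The ground set of the `(k,ℓ)`-sparsity matroid on the vertex set `V`: pairs of a
nonempty edge `e ⊆ V` together with an index `j < k·|e|`. -/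
def SparsityGround (V : Type*) [DecidableEq V] (k : ℕ) : Type _ :=
  (e : {t : Finset V // t.Nonempty}) × Fin (k * e.val.card)

/-- The edge multiset of a set of ground elements. -/
def edgesOf {V : Type*} [DecidableEq V] {k : ℕ} (X : Finset (SparsityGround V k)) :
    Multiset (Finset V) :=
  X.val.map fun p => p.1.val

section Aux
open Finset
variable {V : Type*} [DecidableEq V] {k l : ℕ}

instance : DecidableEq (SparsityGround V k) := by
  unfold SparsityGround; exact inferInstance

instance [Fintype V] : Fintype (SparsityGround V k) := by
  unfold SparsityGround; exact inferInstance

/-- the span count in terms of the ground set. -/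
def cnt (X : Finset (SparsityGround V k)) (W : Finset V) : ℕ :=
  (X.filter fun p => p.1.val ⊆ W).card

lemma spanCount_edgesOf (X : Finset (SparsityGround V k)) (W : Finset V) :
    spanCount (edgesOf X) W = cnt X W := by
  unfold spanCount edgesOf cnt
  rw [Multiset.filter_map, Multiset.card_map]
  rfl

lemma sparse_iff (X : Finset (SparsityGround V k)) :
    Sparse k l (edgesOf X) ↔ ∀ W, 1 ≤ cnt X W → cnt X W + l ≤ k * W.card := by
  unfold Sparse
  simp only [spanCount_edgesOf]

lemma cnt_mono_left {X Y : Finset (SparsityGround V k)} (h : X ⊆ Y) (W : Finset V) :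
    cnt X W ≤ cnt Y W :=
  Finset.card_le_card (Finset.filter_subset_filter _ h)

lemma cnt_mono_right (X : Finset (SparsityGround V k)) {W W' : Finset V} (h : W ⊆ W') :
    cnt X W ≤ cnt X W' := by
  apply Finset.card_le_card
  exact Finset.filter_subset_filter _ (by intro p hp; exact hp) |>.trans (by
    intro p hp
    simp only [Finset.mem_filter] at hp ⊢
    exact ⟨hp.1, hp.2.trans h⟩)

lemma cnt_supermod (X : Finset (SparsityGround V k)) (W1 W2 : Finset V) :
    cnt X W1 + cnt X W2 ≤ cnt X (W1 ∪ W2) + cnt X (W1 ∩ W2) := by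
  classical
  have hinter : (X.filter fun p => p.1.val ⊆ W1) ∩ (X.filter fun p => p.1.val ⊆ W2)
      = X.filter fun p => p.1.val ⊆ W1 ∩ W2 := by
    ext p
    simp only [Finset.mem_inter, Finset.mem_filter, Finset.subset_inter_iff]
    tauto
  have hunion : (X.filter fun p => p.1.val ⊆ W1) ∪ (X.filter fun p => p.1.val ⊆ W2)
      ⊆ X.filter fun p => p.1.val ⊆ W1 ∪ W2 := by
    intro p hp
    simp only [Finset.mem_union, Finset.mem_filter] at hp ⊢
    rcases hp with ⟨h1, h2⟩ | ⟨h1, h2⟩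
    · exact ⟨h1, h2.trans Finset.subset_union_left⟩
    · exact ⟨h1, h2.trans Finset.subset_union_right⟩
  have key := Finset.card_union_add_card_inter
      (X.filter fun p => p.1.val ⊆ W1) (X.filter fun p => p.1.val ⊆ W2)
  unfold cnt
  rw [← key, hinter]
  have := Finset.card_le_card hunion
  omega

end Aux

section Tight
open Finset
variable {V : Type*} [DecidableEq V] {k l : ℕ}

/-- Sparsity as a predicate on finsets of the ground set. -/
def SparseF (k l : ℕ) (X : Finset (SparsityGround V k)) : Prop :=
  ∀ W : Finset V, 1 ≤ cnt X W → cnt X W + l ≤ k * W.card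

lemma sparseF_iff (X : Finset (SparsityGround V k)) :
    Sparse k l (edgesOf X) ↔ SparseF k l X := sparse_iff X

lemma sparseF_mono {X Y : Finset (SparsityGround V k)} (h : Y ⊆ X)
    (hX : SparseF k l X) : SparseF k l Y := by
  intro W hW
  have h1 := cnt_mono_left h W
  have h2 := hX W (le_trans hW h1)
  omega

/-- A tight vertex set. -/
def Tight (k l : ℕ) (I : Finset (SparsityGround V k)) (W : Finset V) : Prop :=
  1 ≤ cnt I W ∧ cnt I W + l = k * W.card

lemma tight_union' {I : Finset (SparsityGround V k)} (hI : SparseF k l I)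
    {W1 W2 : Finset V} (h1 : Tight k l I W1) (h2 : Tight k l I W2)
    (hc1 : 1 ≤ cnt I (W1 ∩ W2)) :
    Tight k l I (W1 ∪ W2) := by
  have hsup := cnt_supermod I W1 W2
  have hu1 : 1 ≤ cnt I (W1 ∪ W2) :=
    le_trans h1.1 (cnt_mono_right I Finset.subset_union_left)
  have hsU := hI (W1 ∪ W2) hu1
  have hsI := hI (W1 ∩ W2) hc1
  have hcards := Finset.card_union_add_card_inter W1 W2
  have hcards' : k * (W1 ∪ W2).card + k * (W1 ∩ W2).card = k * W1.card + k * W2.card := by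
    rw [← Nat.mul_add, ← Nat.mul_add, hcards]
  have e1 := h1.2; have e2 := h2.2
  exact ⟨hu1, by omega⟩

lemma tight_union {I : Finset (SparsityGround V k)} (hI : SparseF k l I)
    {W1 W2 : Finset V} (h1 : Tight k l I W1) (h2 : Tight k l I W2)
    {e : Finset V} (he1 : e ⊆ W1) (he2 : e ⊆ W2) (hke : 1 + l ≤ k * e.card) :
    Tight k l I (W1 ∪ W2) := by
  have hsup := cnt_supermod I W1 W2
  have hu1 : 1 ≤ cnt I (W1 ∪ W2) :=
    le_trans h1.1 (cnt_mono_right I Finset.subset_union_left)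
  have hsU := hI (W1 ∪ W2) hu1
  have hcards := Finset.card_union_add_card_inter W1 W2
  have hcards' : k * (W1 ∪ W2).card + k * (W1 ∩ W2).card = k * W1.card + k * W2.card := by
    rw [← Nat.mul_add, ← Nat.mul_add, hcards]
  have hek : k * e.card ≤ k * (W1 ∩ W2).card :=
    Nat.mul_le_mul_left k (Finset.card_le_card (Finset.subset_inter he1 he2))
  have hc1 : 1 ≤ cnt I (W1 ∩ W2) := by
    by_contra hc
    push_neg at hc
    interval_cases h : cnt I (W1 ∩ W2)
    · have e1 := h1.2; have e2 := h2.2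
      omega
  exact tight_union' hI h1 h2 hc1

lemma exists_maxTight {I : Finset (SparsityGround V k)} [Fintype V] (hI : SparseF k l I)
    {e W0 : Finset V} (h0 : Tight k l I W0) (he0 : e ⊆ W0) (hke : 1 + l ≤ k * e.card) :
    ∃ W, Tight k l I W ∧ e ⊆ W ∧ ∀ W', Tight k l I W' → e ⊆ W' → W' ⊆ W := by
  classical
  set s : Finset (Finset V) := Finset.univ.filter (fun W => Tight k l I W ∧ e ⊆ W) with hs
  have hmem : ∀ W, W ∈ s ↔ (Tight k l I W ∧ e ⊆ W) := by
    intro W; simp [hs]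
  have hne : s.Nonempty := ⟨W0, (hmem W0).2 ⟨h0, he0⟩⟩
  obtain ⟨W, hWs, hmax⟩ := s.exists_max_image (fun W => W.card) hne
  rw [hmem] at hWs
  refine ⟨W, hWs.1, hWs.2, ?_⟩
  intro W' hW' heW'
  have hun : Tight k l I (W ∪ W') := tight_union hI hWs.1 hW' hWs.2 heW' hke
  have hunmem : W ∪ W' ∈ s := (hmem _).2 ⟨hun, hWs.2.trans Finset.subset_union_left⟩
  have hle := hmax _ hunmem
  have : W ∪ W' = W :=
    (Finset.eq_of_subset_of_card_le Finset.subset_union_left hle).symm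
  rw [← this]
  exact Finset.subset_union_right

end Tight

section Main
open Finset
variable {V : Type*} [Fintype V] [DecidableEq V] {k l : ℕ}

lemma cnt_insert {p : SparsityGround V k} {X : Finset (SparsityGround V k)} (hp : p ∉ X)
    (W : Finset V) :
    cnt (insert p X) W = cnt X W + (if p.1.val ⊆ W then 1 else 0) := by
  classical
  unfold cnt
  rw [Finset.filter_insert]
  split
  · rw [Finset.card_insert_of_notMem (fun h => hp (Finset.mem_filter.mp h).1)]
  · simp

lemma one_le_cnt_of_mem {p : SparsityGround V k} {X : Finset (SparsityGround V k)}
    {W : Finset V} (hp : p ∈ X) (hsub : p.1.val ⊆ W) : 1 ≤ cnt X W :=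
  Finset.card_pos.2 ⟨p, Finset.mem_filter.2 ⟨hp, hsub⟩⟩

lemma sparseF_empty : SparseF k l (∅ : Finset (SparsityGround V k)) := by
  intro W hW
  simp [cnt] at hW

lemma exists_blocker {I : Finset (SparsityGround V k)} {p : SparsityGround V k}
    (hI : SparseF k l I) (hp : p ∉ I) (hns : ¬ SparseF k l (insert p I))
    (hke : 1 + l ≤ k * p.1.val.card) :
    ∃ W, Tight k l I W ∧ p.1.val ⊆ W := by
  unfold SparseF at hns
  push_neg at hns
  obtain ⟨W, hW1, hW2⟩ := hns
  have hcnt := cnt_insert hp W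
  by_cases hsub : p.1.val ⊆ W
  · rw [if_pos hsub] at hcnt
    have hkW : k * p.1.val.card ≤ k * W.card :=
      Nat.mul_le_mul_left k (Finset.card_le_card hsub)
    have hcI : 1 ≤ cnt I W := by omega
    have := hI W hcI
    exact ⟨W, ⟨hcI, by omega⟩, hsub⟩
  · rw [if_neg hsub] at hcnt
    rw [hcnt] at hW1 hW2
    exact absurd (hI W hW1) (by omega)

lemma sparseF_aug {I J : Finset (SparsityGround V k)} (hI : SparseF k l I)
    (hJ : SparseF k l J) (hcard : I.card < J.card) :
    ∃ p ∈ J, p ∉ I ∧ SparseF k l (insert p I) := by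
  classical
  by_contra hcon
  push_neg at hcon
  have hke : ∀ p ∈ J, 1 + l ≤ k * p.1.val.card := by
    intro p hp
    have h1 : 1 ≤ cnt J p.1.val := one_le_cnt_of_mem hp (subset_refl _)
    have := hJ p.1.val h1
    omega
  have hTex : ∀ p : SparsityGround V k, ∃ W : Finset V,
      p ∈ J \ I → Tight k l I W ∧ p.1.val ⊆ W ∧
        ∀ W', Tight k l I W' → p.1.val ⊆ W' → W' ⊆ W := by
    intro p
    by_cases hp : p ∈ J \ I
    · obtain ⟨hpJ, hpI⟩ := Finset.mem_sdiff.mp hp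
      obtain ⟨W0, hW0, hW0e⟩ := exists_blocker hI hpI (hcon p hpJ hpI) (hke p hpJ)
      obtain ⟨W, h1, h2, h3⟩ := exists_maxTight hI hW0 hW0e (hke p hpJ)
      exact ⟨W, fun _ => ⟨h1, h2, h3⟩⟩
    · exact ⟨∅, fun h => absurd h hp⟩
  choose T hT using hTex
  have hdisj : ∀ p ∈ J \ I, ∀ q ∈ J \ I, T p = T q ∨ cnt I (T p ∩ T q) = 0 := by
    intro p hp q hq
    by_cases hc : 1 ≤ cnt I (T p ∩ T q)
    · left
      obtain ⟨hp1, hp2, hp3⟩ := hT p hp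
      obtain ⟨hq1, hq2, hq3⟩ := hT q hq
      have hun : Tight k l I (T p ∪ T q) := tight_union' hI hp1 hq1 hc
      have h1 : T p ∪ T q ⊆ T p := hp3 _ hun (hp2.trans Finset.subset_union_left)
      have h2 : T p ∪ T q ⊆ T q := hq3 _ hun (hq2.trans Finset.subset_union_right)
      exact Finset.Subset.antisymm
        ((Finset.subset_union_left).trans h2) ((Finset.subset_union_right).trans h1)
    · right; omega
  set 𝒯 : Finset (Finset V) := (J \ I).image T with h𝒯
  have hcntle : ∀ W ∈ 𝒯, cnt J W ≤ cnt I W := by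
    intro W hW
    obtain ⟨p, hp, rfl⟩ := Finset.mem_image.mp hW
    obtain ⟨hp1, hp2, _⟩ := hT p hp
    have hpJ : p ∈ J := (Finset.mem_sdiff.mp hp).1
    have h1 : 1 ≤ cnt J (T p) := one_le_cnt_of_mem hpJ hp2
    have h2 := hJ (T p) h1
    have h3 := hp1.2
    omega
  set B : Finset V → Finset (SparsityGround V k) :=
    fun W => I.filter (fun q => q.1.val ⊆ W) with hB
  have hBdisj : ∀ W ∈ 𝒯, ∀ W' ∈ 𝒯, W ≠ W' → Disjoint (B W) (B W') := by
    intro W hW W' hW' hne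
    rw [Finset.disjoint_left]
    intro q hq hq'
    obtain ⟨p, hp, rfl⟩ := Finset.mem_image.mp hW
    obtain ⟨p', hp', rfl⟩ := Finset.mem_image.mp hW'
    rcases hdisj p hp p' hp' with h | h
    · exact hne h
    · have hqI : q ∈ I := (Finset.mem_filter.mp hq).1
      have hq1 : q.1.val ⊆ T p := (Finset.mem_filter.mp hq).2
      have hq2 : q.1.val ⊆ T p' := (Finset.mem_filter.mp hq').2
      have : 1 ≤ cnt I (T p ∩ T p') :=
        one_le_cnt_of_mem hqI (Finset.subset_inter hq1 hq2)
      omega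
  set U : Finset (SparsityGround V k) := 𝒯.biUnion B with hU
  have hUcard : U.card = ∑ W ∈ 𝒯, cnt I W := Finset.card_biUnion hBdisj
  have hUsub : U ⊆ I := by
    intro q hq
    obtain ⟨W, _, hqW⟩ := Finset.mem_biUnion.mp hq
    exact (Finset.mem_filter.mp hqW).1
  set Jin : Finset (SparsityGround V k) :=
    J.filter (fun q => ∃ W ∈ 𝒯, q.1.val ⊆ W) with hJin
  have hJincard : Jin.card ≤ ∑ W ∈ 𝒯, cnt J W := by
    have hsub : Jin ⊆ 𝒯.biUnion (fun W => J.filter (fun q => q.1.val ⊆ W)) := by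
      intro q hq
      have hmem := Finset.mem_filter.mp hq
      obtain ⟨W, hW, hqW⟩ := hmem.2
      exact Finset.mem_biUnion.mpr ⟨W, hW, Finset.mem_filter.mpr ⟨hmem.1, hqW⟩⟩
    calc Jin.card ≤ _ := Finset.card_le_card hsub
      _ ≤ ∑ W ∈ 𝒯, (J.filter (fun q => q.1.val ⊆ W)).card := Finset.card_biUnion_le
      _ = ∑ W ∈ 𝒯, cnt J W := rfl
  set Jout : Finset (SparsityGround V k) :=
    J.filter (fun q => ¬ ∃ W ∈ 𝒯, q.1.val ⊆ W) with hJout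
  have hJoutsub : Jout ⊆ I \ U := by
    intro q hq
    obtain ⟨hqJ, hqn⟩ := Finset.mem_filter.mp hq
    have hqI : q ∈ I := by
      by_contra hqI
      have hqJI : q ∈ J \ I := Finset.mem_sdiff.mpr ⟨hqJ, hqI⟩
      exact hqn ⟨T q, Finset.mem_image_of_mem T hqJI, (hT q hqJI).2.1⟩
    refine Finset.mem_sdiff.mpr ⟨hqI, ?_⟩
    intro hqU
    obtain ⟨W, hW, hqW⟩ := Finset.mem_biUnion.mp hqU
    exact hqn ⟨W, hW, (Finset.mem_filter.mp hqW).2⟩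
  have hsplit : Jin.card + Jout.card = J.card :=
    Finset.card_filter_add_card_filter_not _
  have hsum : ∑ W ∈ 𝒯, cnt J W ≤ ∑ W ∈ 𝒯, cnt I W :=
    Finset.sum_le_sum hcntle
  have hIsplit : U.card + (I \ U).card = I.card := by
    rw [Finset.card_sdiff_of_subset hUsub]
    have := Finset.card_le_card hUsub
    omega
  have hJoutcard : Jout.card ≤ (I \ U).card := Finset.card_le_card hJoutsub
  omega

end Main

/-- The `(k,ℓ)`-sparse hypergraphs on `V` (with multiplicities bounded by `k·|e|`) form
the independent sets of a matroid on the ground set `SparsityGround V k`; in particular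
all maximal `(k,ℓ)`-sparse edge multisets have the same cardinality. -/
theorem stmt_14 {V : Type*} [Fintype V] [DecidableEq V] (k l : ℕ) (hk : 1 ≤ k) :
    ∃ M : Matroid (SparsityGround V k),
      M.E = Set.univ ∧
      (∀ X : Finset (SparsityGround V k), M.Indep ↑X ↔ Sparse k l (edgesOf X)) ∧
      (∀ X Y : Finset (SparsityGround V k),
        (Sparse k l (edgesOf X) ∧
          ∀ Z : Finset (SparsityGround V k), X ⊆ Z → Sparse k l (edgesOf Z) → Z = X) →
        (Sparse k l (edgesOf Y) ∧
          ∀ Z : Finset (SparsityGround V k), Y ⊆ Z → Sparse k l (edgesOf Z) → Z = Y) →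
        X.card = Y.card) := by
  classical
  refine ⟨(IndepMatroid.ofFinset (α := SparsityGround V k) Set.univ
      (fun X => SparseF k l X) sparseF_empty
      (fun I J hJ hIJ => sparseF_mono hIJ hJ)
      (fun I J hI hJ h => sparseF_aug hI hJ h)
      (fun I _ => Set.subset_univ _)).matroid, rfl, ?_, ?_⟩
  · intro X
    rw [IndepMatroid.matroid_indep_iff, IndepMatroid.ofFinset_indep, sparseF_iff]
  · intro X Y hX hY
    rw [sparseF_iff] at hX hY
    rcases lt_trichotomy X.card Y.card with h | h | h
    · obtain ⟨p, hpY, hpX, hsp⟩ := sparseF_aug hX.1 hY.1 h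
      have := hX.2 (insert p X) (Finset.subset_insert _ _) ((sparseF_iff _).mpr hsp)
      exact absurd (this ▸ Finset.mem_insert_self p X) hpX
    · exact h
    · obtain ⟨p, hpX, hpY, hsp⟩ := sparseF_aug hY.1 hX.1 h
      have := hY.2 (insert p Y) (Finset.subset_insert _ _) ((sparseF_iff _).mpr hsp)
      exact absurd (this ▸ Finset.mem_insert_self p Y) hpY
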